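/- Let p be a real number, and define the polynomials G_n(p) ∈ ℝ[t] by G_0(p) = 1 and G_n(p) = (p/n) Σ_{k=1}^{n} (−1)^{k+1} B_k · G_{n−k}(p) for n ≥ 1, where B_k ∈ ℝ[t] is the k-th Bernoulli polynomial. Write G_{n,k}(p) for the coefficient of t^k in G_n(p). Then for all n ≥ 0 and 0 ≤ k ≤ n, G_{n,k}(p) = C(p−n+k, k) · G_{n−k,0}(p), where C(x,k) is the generalized binomial coefficient. -/

import Mathlib

open Finset Polynomial

/-- The `k`-th Bernoulli polynomial as a real polynomial
(generating function `u e^{tu}/(e^u - 1)`, so `bernR 1 = X - 1/2`). -/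
noncomputable def bernR (k : ℕ) : Polynomial ℝ :=
  (Polynomial.bernoulli k).map (algebraMap ℚ ℝ)

/-- The generalized binomial coefficient `C(x, k) = x(x-1)⋯(x-k+1)/k!`. -/
noncomputable def genBinom (x : ℝ) (k : ℕ) : ℝ :=
  (∏ i ∈ Finset.range k, (x - (i : ℝ))) / (Nat.factorial k : ℝ)

lemma bernR_zero : bernR 0 = 1 := by simp [bernR]

lemma derivative_bernR (k : ℕ) :
    derivative (bernR (k+1)) = C ((k:ℝ)+1) * bernR k := by
  simp only [bernR, derivative_map, Polynomial.derivative_bernoulli_add_one,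
    Polynomial.map_mul]
  congr 1
  simp [Polynomial.map_natCast, map_add, map_one]

lemma icc_to_range (f : ℕ → Polynomial ℝ) (m : ℕ) :
    ∑ k ∈ Icc 1 m, f k = ∑ j ∈ range m, f (1 + j) := by
  rw [← Finset.Ico_add_one_right_eq_Icc, Finset.sum_Ico_eq_sum_range]
  simp

lemma deriv_G (p : ℝ) (G : ℕ → Polynomial ℝ) (hG0 : G 0 = 1)
    (hG : ∀ n : ℕ, 1 ≤ n →
      G n = Polynomial.C (p / (n : ℝ)) *
        ∑ k ∈ Finset.Icc 1 n, (-1 : Polynomial ℝ) ^ (k + 1) * bernR k * G (n - k)) :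
    ∀ n : ℕ, derivative (G (n+1)) = C (p - n) * G n := by
  have hmul : ∀ n : ℕ, C (n:ℝ) * G n =
      C p * ∑ k ∈ Icc 1 n, (-1 : Polynomial ℝ) ^ (k + 1) * bernR k * G (n - k) := by
    intro n
    rcases Nat.eq_zero_or_pos n with h | h
    · subst h; simp
    · have hn : (n:ℝ) ≠ 0 := Nat.cast_ne_zero.mpr (Nat.pos_iff_ne_zero.mp h)
      have : (n:ℝ) * (p / n) = p := by field_simp
      rw [hG n h, ← mul_assoc, ← C_mul, this]
  intro n
  induction n using Nat.strong_induction_on with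
  | _ n ih =>
    have hC : (C ((n:ℝ)+1) : Polynomial ℝ) ≠ 0 := by
      rw [Ne, C_eq_zero]; positivity
    apply mul_left_cancel₀ hC
    have key : derivative (∑ k ∈ Icc 1 (n+1), (-1 : Polynomial ℝ) ^ (k + 1) * bernR k * G (n+1-k))
        = G n + C (p - n - 1) * ∑ k ∈ Icc 1 n, (-1 : Polynomial ℝ) ^ (k + 1) * bernR k * G (n-k) := by
      rw [icc_to_range (fun k => (-1 : Polynomial ℝ) ^ (k + 1) * bernR k * G (n+1-k)) (n+1),
        icc_to_range (fun k => (-1 : Polynomial ℝ) ^ (k + 1) * bernR k * G (n-k)) n,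
        derivative_sum]
      have step : ∀ j ∈ range (n+1),
          derivative ((-1 : Polynomial ℝ) ^ (1 + j + 1) * bernR (1+j) * G (n+1-(1+j)))
          = (-1 : Polynomial ℝ) ^ j * (C ((j:ℝ)+1) * bernR j) * G (n-j)
            + (-1 : Polynomial ℝ) ^ j * bernR (j+1) * derivative (G (n-j)) := by
        intro j hj
        have e1 : n + 1 - (1 + j) = n - j := by omega
        have e2 : (-1 : Polynomial ℝ) ^ (1 + j + 1) = (-1 : Polynomial ℝ) ^ j := by
          rw [show 1 + j + 1 = j + 2 by omega, pow_add]; simp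
        rw [e1, e2, show 1 + j = j + 1 by omega, mul_assoc, derivative_mul,
          derivative_mul, derivative_bernR]
        simp only [derivative_pow, derivative_neg, derivative_one, neg_zero]
        ring
      rw [Finset.sum_congr rfl step, Finset.sum_add_distrib]
      have sum1 : ∑ j ∈ range (n+1),
          (-1 : Polynomial ℝ) ^ j * (C ((j:ℝ)+1) * bernR j) * G (n-j)
          = (∑ j ∈ range n,
              (-1 : Polynomial ℝ) ^ (j+1) * (C ((j:ℝ)+2) * bernR (j+1)) * G (n-1-j)) + G n := by
        rw [Finset.sum_range_succ']
        congr 1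
        · apply Finset.sum_congr rfl
          intro j hj
          have : n - (j + 1) = n - 1 - j := by omega
          rw [this]; push_cast; ring_nf
        · simp [bernR_zero]
      have sum2 : ∑ j ∈ range (n+1),
          (-1 : Polynomial ℝ) ^ j * bernR (j+1) * derivative (G (n-j))
          = ∑ j ∈ range n,
              (-1 : Polynomial ℝ) ^ j * bernR (j+1) * (C (p - (n-1-j : ℕ)) * G (n-1-j)) := by
        rw [Finset.sum_range_succ]
        have : n - n = 0 := by omega
        rw [this, hG0, derivative_one, mul_zero, add_zero]
        apply Finset.sum_congr rfl
        intro j hj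
        have hjn : j < n := mem_range.mp hj
        have e1 : n - j = (n - 1 - j) + 1 := by omega
        rw [e1, ih (n-1-j) (by omega)]
      rw [sum1, sum2, add_comm _ (G n), add_assoc]
      congr 1
      rw [Finset.mul_sum, ← Finset.sum_add_distrib]
      apply Finset.sum_congr rfl
      intro j hj
      have hjn : j < n := mem_range.mp hj
      have hc : ((n - 1 - j : ℕ) : ℝ) = (n:ℝ) - 1 - j := by
        have h1 : 1 + j ≤ n := by omega
        rw [Nat.sub_sub, Nat.cast_sub h1]
        push_cast
        ring
      have h3 : (-1 : Polynomial ℝ) ^ (j+1) = -(-1 : Polynomial ℝ) ^ j := by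
        rw [pow_succ]; ring
      have h4 : (-1 : Polynomial ℝ) ^ (1+j+1) = (-1 : Polynomial ℝ) ^ j := by
        rw [show 1+j+1 = j+2 by omega, pow_add]; norm_num
      have hthis : Polynomial.C (p - ((n:ℝ) - 1 - (j:ℝ))) - Polynomial.C ((j:ℝ)+2)
          = Polynomial.C (p - (n:ℝ) - 1) := by
        rw [← C_sub]; congr 1; ring
      rw [hc, h3, h4, show 1+j = j+1 by omega, show n - (j+1) = n-1-j by omega]
      linear_combination ((-1 : Polynomial ℝ)^j * bernR (j+1) * G (n-1-j)) * hthis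
    calc C ((n:ℝ)+1) * derivative (G (n+1))
        = derivative (C (((n+1:ℕ)):ℝ) * G (n+1)) := by
          rw [derivative_C_mul]; push_cast; ring_nf
      _ = derivative (C p * ∑ k ∈ Icc 1 (n+1), (-1 : Polynomial ℝ) ^ (k + 1) * bernR k * G (n+1-k)) := by
          rw [hmul (n+1)]
      _ = C p * (G n + C (p - n - 1) * ∑ k ∈ Icc 1 n, (-1 : Polynomial ℝ) ^ (k + 1) * bernR k * G (n-k)) := by
          rw [derivative_C_mul, key]
      _ = C p * G n + C (p - n - 1) * (C p * ∑ k ∈ Icc 1 n, (-1 : Polynomial ℝ) ^ (k + 1) * bernR k * G (n-k)) := by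
          ring
      _ = C p * G n + C (p - n - 1) * (C (n:ℝ) * G n) := by rw [← hmul n]
      _ = C (((n:ℝ)+1)*(p-(n:ℝ))) * G n := by
          rw [show ((n:ℝ)+1)*(p-(n:ℝ)) = p + (p-(n:ℝ)-1)*(n:ℝ) by ring, C_add, C_mul]
          ring
      _ = C ((n:ℝ)+1) * (C (p - (n:ℝ)) * G n) := by rw [C_mul, mul_assoc]

lemma genBinom_zero (x : ℝ) : genBinom x 0 = 1 := by simp [genBinom]

lemma genBinom_succ (x : ℝ) (k : ℕ) :
    genBinom x (k+1) = genBinom x k * (x - k) / ((k:ℝ)+1) := by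
  unfold genBinom
  rw [Finset.prod_range_succ, Nat.factorial_succ, div_mul_eq_mul_div, div_div]
  push_cast
  rw [mul_comm ((k:ℝ)+1)]

/-- the coefficient identity
`G_{n,k}(p) = C(p-n+k, k) G_{n-k,0}(p)`. -/
theorem G_coeff_identity
    (p : ℝ)
    (G : ℕ → Polynomial ℝ) (hG0 : G 0 = 1)
    (hG : ∀ n : ℕ, 1 ≤ n →
      G n = Polynomial.C (p / (n : ℝ)) *
        ∑ k ∈ Finset.Icc 1 n, (-1 : Polynomial ℝ) ^ (k + 1) * bernR k * G (n - k)) :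
    ∀ n k : ℕ, k ≤ n →
      (G n).coeff k = genBinom (p - (n : ℝ) + (k : ℝ)) k * (G (n - k)).coeff 0 := by
  have hd := deriv_G p G hG0 hG
  intro n k
  induction k generalizing n with
  | zero => intro _; simp [genBinom_zero]
  | succ k ihk =>
    intro hkn
    obtain ⟨m, rfl⟩ : ∃ m, n = m + 1 := ⟨n-1, by omega⟩
    have hkm : k ≤ m := by omega
    have h1 : (derivative (G (m+1))).coeff k = (G (m+1)).coeff (k+1) * ((k:ℝ)+1) := by
      rw [coeff_derivative]
    have h2 : (derivative (G (m+1))).coeff k = (p - m) * (G m).coeff k := by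
      rw [hd m, coeff_C_mul]
    have h3 := ihk m hkm
    have hk1 : ((k:ℝ)+1) ≠ 0 := by positivity
    have e1 : m + 1 - (k+1) = m - k := by omega
    have e2 : p - ((m:ℝ)+1) + ((k:ℝ)+1) = p - m + k := by ring
    have hcoeff : (G (m+1)).coeff (k+1)
        = (p - m) * (genBinom (p - (m:ℝ) + (k:ℝ)) k * (G (m-k)).coeff 0) / ((k:ℝ)+1) := by
      rw [eq_div_iff hk1, ← h1, h2, h3]
    rw [hcoeff, e1]
    push_cast
    rw [e2, genBinom_succ]
    have e3 : p - (m:ℝ) + (k:ℝ) - (k:ℝ) = p - m := by ring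
    rw [e3]
    ring
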